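/- Let G be an n̄×y matrix and F an n̄×x matrix over a finite field 𝔽_q, and let B ⊆ {1,…,n̄}. Then the distribution of P_B(Fm+GU) with U uniform on 𝔽_q^y is the same for every m ∈ 𝔽_q^x — i.e., for all m,m' ∈ 𝔽_q^x and all z ∈ 𝔽_q^{|B|}, the number of u ∈ 𝔽_q^y with P_B(Fm+Gu) = z equals the number of u with P_B(Fm'+Gu) = z — if and only if every column of P_B F lies in the column span of P_B G. -/
import Mathlib


open Matrix

/-- The column span of a matrix, as a submodule of the space of column vectors. -/
def colSpan {K : Type*} [Field K] {ι ν : Type*} (M : Matrix ι ν K) : Submodule K (ι → K) :=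
  Submodule.span K (Set.range fun j : ν => fun i : ι => M i j)

/-- The row submatrix of `M` consisting of the rows indexed by the finite set `S`
(the projection `P_S M`). -/
def rowRestrict {K : Type*} {ι ν : Type*} (S : Finset ι) (M : Matrix ι ν K) :
    Matrix {i // i ∈ S} ν K :=
  Matrix.of fun i j => M i.1 j

lemma colSpan_eq_range {K : Type*} [Field K] {ι ν : Type*} [Fintype ν] [DecidableEq ν]
    (M : Matrix ι ν K) : colSpan M = LinearMap.range M.mulVecLin := by
  rw [Matrix.range_mulVecLin]
  rfl

/-- the distribution of `P_B(Fm + GU)`, with `U` uniform on `𝔽_q^y`,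
is the same for every `m` iff every column of `P_B F` lies in the column span
of `P_B G`. -/
theorem stmt5 {K : Type*} [Field K] [Fintype K] {nb y x : ℕ}
    (G : Matrix (Fin nb) (Fin y) K) (F : Matrix (Fin nb) (Fin x) K) (B : Finset (Fin nb)) :
    (∀ (m m' : Fin x → K) (z : {i // i ∈ B} → K),
        Nat.card {u : Fin y → K //
            (fun i : {i // i ∈ B} => (F.mulVec m + G.mulVec u) i.1) = z}
          = Nat.card {u : Fin y → K //
            (fun i : {i // i ∈ B} => (F.mulVec m' + G.mulVec u) i.1) = z})
      ↔
    (∀ j : Fin x, (fun i : {i // i ∈ B} => F i.1 j) ∈ colSpan (rowRestrict B G)) := by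
  have hre : ∀ (m : Fin x → K) (u : Fin y → K),
      (fun i : {i // i ∈ B} => (F.mulVec m + G.mulVec u) i.1)
        = (rowRestrict B F).mulVec m + (rowRestrict B G).mulVec u := fun m u => rfl
  have hcol : ∀ (j : Fin x),
      (rowRestrict B F).mulVec (Pi.single j 1) = fun i => F i.1 j := by
    intro j
    funext i
    simp [rowRestrict, Matrix.mulVec_single]
  constructor
  · intro h j
    rw [colSpan_eq_range]
    have key := h (Pi.single j 1) 0 ((rowRestrict B F).mulVec (Pi.single j 1))
    have hpos : 0 < Nat.card {u : Fin y → K //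
        (fun i : {i // i ∈ B} => (F.mulVec (Pi.single j 1) + G.mulVec u) i.1)
          = (rowRestrict B F).mulVec (Pi.single j 1)} := by
      refine Nat.card_pos_iff.mpr ⟨⟨⟨0, ?_⟩⟩, inferInstance⟩
      rw [hre]
      simp
    rw [key] at hpos
    obtain ⟨⟨u, hu⟩, -⟩ := Nat.card_pos_iff.mp hpos
    rw [hre] at hu
    simp only [Matrix.mulVec_zero, zero_add] at hu
    exact ⟨u, by rw [Matrix.mulVecLin_apply, hu, hcol]⟩
  · intro h m m' z
    have hm : ∀ v : Fin x → K,
        (rowRestrict B F).mulVec v ∈ colSpan (rowRestrict B G) := by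
      intro v
      have : (rowRestrict B F).mulVec v = ∑ j, v j • fun i => F i.1 j := by
        funext i
        simp [rowRestrict, Matrix.mulVec, dotProduct, mul_comm]
      rw [this]
      exact Submodule.sum_mem _ fun j _ => Submodule.smul_mem _ _ (h j)
    have hsub : ((rowRestrict B F).mulVec m' - (rowRestrict B F).mulVec m)
        ∈ LinearMap.range (rowRestrict B G).mulVecLin := by
      rw [← colSpan_eq_range]
      exact sub_mem (hm m') (hm m)
    obtain ⟨u₀, hu₀⟩ := hsub
    rw [Matrix.mulVecLin_apply] at hu₀
    refine Nat.card_congr (Equiv.subtypeEquiv (Equiv.subRight u₀) ?_)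
    intro u
    simp only [Equiv.subRight_apply]
    rw [hre, hre]
    have hG : (rowRestrict B G).mulVec (u - u₀)
        = (rowRestrict B G).mulVec u - (rowRestrict B G).mulVec u₀ := by
      simp [Matrix.mulVec_sub]
    constructor <;> intro hz
    · rw [hG, hu₀, ← hz]; abel
    · rw [hG, hu₀] at hz; rw [← hz]; abel
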